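/- There is an absolute constant C > 0 with the following property (a variant of the Balog–Szemerédi–Gowers theorem). Let A and B be sets of n integers each and let G be a bipartite graph between A and B with p·n² edges, where p > 0, and suppose the partial sumset A +_G B has size at most K·|A|. Then there is a subset A' of A with |A'| ≥ p·n/4 and |A' − A'| ≤ C · K⁴ · p⁻⁵ · n. -/

import Mathlib

open Finset Pointwise

/-- The `k`-term arithmetic progression `{x, x+d, …, x+(k-1)d}` as a finite set. -/
def AP (k : ℕ) (x d : ℤ) : Finset ℤ := (Finset.range k).image (fun i : ℕ => x + (i : ℤ) * d)

/-- A set of integers is `k`-AP free if it contains no nontrivial `k`-term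
arithmetic progression. -/
def APFree (k : ℕ) (A : Set ℤ) : Prop :=
  ∀ x d : ℤ, d ≠ 0 → ¬ (↑(AP k x d) : Set ℤ) ⊆ A

/-- `fAP s A` is the number of nontrivial `s`-term arithmetic progressions contained
in the finite set `A`. -/
noncomputable def fAP (s : ℕ) (A : Finset ℤ) : ℕ :=
  Nat.card {P : Finset ℤ // P ⊆ A ∧ ∃ x d : ℤ, d ≠ 0 ∧ P = AP s x d}

/-- `fsk s k n` is the maximum number of nontrivial `s`-term arithmetic progressions
in a `k`-AP free set of `n` integers. -/
noncomputable def fsk (s k n : ℕ) : ℕ :=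
  sSup {m | ∃ A : Finset ℤ, A.card = n ∧ APFree k ↑A ∧ fAP s A = m}

/-- `rk k n` is the size of the largest `k`-AP free subset of `{1, …, n}`. -/
noncomputable def rk (k n : ℕ) : ℕ :=
  sSup {m | ∃ A : Finset ℤ, A ⊆ Finset.Icc 1 (n : ℤ) ∧ APFree k ↑A ∧ A.card = m}

/-- The partial sumset `A +_G B` along the edge set `E` of a bipartite graph. -/
def partialSumset (E : Finset (ℤ × ℤ)) : Finset ℤ := E.image (fun e => e.1 + e.2)

/-- `pathCount A B E a a'` is the number of (ordered) paths `(a, b, a'', b', a')` of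
length four between `a` and `a'` in the bipartite graph with parts `A`, `B` and
edge set `E`. -/
def pathCount (A B : Finset ℤ) (E : Finset (ℤ × ℤ)) (a a' : ℤ) : ℕ :=
  ((B ×ˢ A ×ˢ B).filter (fun t =>
    (a, t.1) ∈ E ∧ (t.2.1, t.1) ∈ E ∧ (t.2.1, t.2.2) ∈ E ∧ (a', t.2.2) ∈ E)).card

theorem bsg_degsum (A B : Finset ℤ) (E : Finset (ℤ × ℤ)) (hE : E ⊆ A ×ˢ B) :
    ∑ b ∈ B, (A.filter (fun a => (a, b) ∈ E)).card = E.card := by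
  classical
  rw [Finset.card_eq_sum_card_fiberwise (f := Prod.snd) (t := B)
    (fun e he => (Finset.mem_product.1 (hE he)).2)]
  refine Finset.sum_congr rfl fun b _ => ?_
  refine Finset.card_bij (fun a _ => (a, b)) ?_ ?_ ?_
  · intro a ha
    rw [mem_filter] at ha ⊢
    exact ⟨ha.2, rfl⟩
  · intro a ha a' ha' h
    exact (Prod.mk.injEq _ _ _ _ ▸ h).1
  · intro e he
    rw [mem_filter] at he
    refine ⟨e.1, ?_, ?_⟩
    · rw [mem_filter]
      refine ⟨(Finset.mem_product.1 (hE he.1)).1, ?_⟩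
      have : (e.1, b) = e := by rw [← he.2]
      rw [this]; exact he.1
    · exact Prod.ext rfl he.2.symm

theorem bsg_badswap (A B : Finset ℤ) (E : Finset (ℤ × ℤ)) (Bad : Finset (ℤ × ℤ))
    (hBad : Bad ⊆ A ×ˢ A) :
    ∑ b ∈ B, (((A.filter (fun a => (a, b) ∈ E)) ×ˢ (A.filter (fun a => (a, b) ∈ E))).filter
        (fun q => q ∈ Bad)).card
      = ∑ q ∈ Bad, (B.filter (fun b => (q.1, b) ∈ E ∧ (q.2, b) ∈ E)).card := by
  classical
  have h1 : ∀ b, ((A.filter (fun a => (a, b) ∈ E)) ×ˢ (A.filter (fun a => (a, b) ∈ E))).filter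
      (fun q => q ∈ Bad) = Bad.filter (fun q => (q.1, b) ∈ E ∧ (q.2, b) ∈ E) := by
    intro b
    ext q
    simp only [mem_filter, mem_product]
    constructor
    · rintro ⟨⟨⟨-, h1⟩, -, h2⟩, hq⟩
      exact ⟨hq, h1, h2⟩
    · rintro ⟨hq, h1, h2⟩
      have := Finset.mem_product.1 (hBad hq)
      exact ⟨⟨⟨this.1, h1⟩, this.2, h2⟩, hq⟩
  simp only [h1, Finset.card_filter]
  rw [Finset.sum_comm]

theorem bsg_badfib (X : Finset ℤ) (Bad : Finset (ℤ × ℤ)) :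
    ((X ×ˢ X).filter (fun q => q ∈ Bad)).card
      = ∑ a ∈ X, (X.filter (fun a' => (a, a') ∈ Bad)).card := by
  classical
  rw [Finset.card_eq_sum_card_fiberwise (f := Prod.fst) (t := X)
    (fun q hq => (Finset.mem_product.1 (Finset.mem_filter.1 hq).1).1)]
  refine Finset.sum_congr rfl fun a ha => ?_
  refine Finset.card_bij (fun q _ => q.2) ?_ ?_ ?_
  · intro q hq
    simp only [mem_filter, mem_product] at hq ⊢
    refine ⟨hq.1.1.2, ?_⟩
    have : (a, q.2) = q := Prod.ext hq.2.symm rfl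
    rw [this]; exact hq.1.2
  · intro q hq q' hq' h
    simp only [mem_filter] at hq hq'
    exact Prod.ext (hq.2.trans hq'.2.symm) h
  · intro a' ha'
    simp only [mem_filter] at ha'
    exact ⟨(a, a'), by simp only [mem_filter, mem_product]; exact ⟨⟨⟨ha, ha'.1⟩, ha'.2⟩, trivial⟩, rfl⟩

theorem bsg_pathlower (B : Finset ℤ) (E : Finset (ℤ × ℤ)) (Good : Finset ℤ) (a a' : ℤ) :
    ∑ c ∈ Good, (B.filter (fun b => (a, b) ∈ E ∧ (c, b) ∈ E)).card
        * (B.filter (fun b => (c, b) ∈ E ∧ (a', b) ∈ E)).card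
      ≤ ((Good ×ˢ B ×ˢ B).filter (fun t =>
          (a, t.2.1) ∈ E ∧ (t.1, t.2.1) ∈ E ∧ (t.1, t.2.2) ∈ E ∧ (a', t.2.2) ∈ E)).card := by
  classical
  rw [Finset.card_eq_sum_card_fiberwise (f := fun t => t.1) (t := Good)
    (fun t ht => (Finset.mem_product.1 (Finset.mem_filter.1 ht).1).1)]
  refine Finset.sum_le_sum fun c hc => ?_
  rw [← Finset.card_product]
  refine Finset.card_le_card_of_injOn (fun bb => (c, bb.1, bb.2)) ?_ ?_
  · intro bb hbb
    simp only [Finset.mem_coe, mem_product, mem_filter] at hbb ⊢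
    exact ⟨⟨⟨hc, hbb.1.1, hbb.2.1⟩, hbb.1.2.1, hbb.1.2.2, hbb.2.2.1, hbb.2.2.2⟩, trivial⟩
  · intro x hx y hy h
    simp only [Prod.mk.injEq] at h
    exact Prod.ext h.2.1 h.2.2

theorem bsg_intoQ (E : Finset (ℤ × ℤ)) (Good B : Finset ℤ) (a a' : ℤ) :
    ((Good ×ˢ B ×ˢ B).filter (fun t =>
        (a, t.2.1) ∈ E ∧ (t.1, t.2.1) ∈ E ∧ (t.1, t.2.2) ∈ E ∧ (a', t.2.2) ∈ E)).card
      ≤ ((partialSumset E ×ˢ partialSumset E ×ˢ partialSumset E ×ˢ partialSumset E).filter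
          (fun q => q.1 - q.2.1 + q.2.2.1 - q.2.2.2 = a - a')).card := by
  classical
  refine Finset.card_le_card_of_injOn
    (fun t => (a + t.2.1, t.1 + t.2.1, t.1 + t.2.2, a' + t.2.2)) ?_ ?_
  · intro t ht
    simp only [Finset.mem_coe, mem_filter, mem_product] at ht ⊢
    obtain ⟨-, h1, h2, h3, h4⟩ := ht
    have m : ∀ {x y : ℤ}, (x, y) ∈ E → x + y ∈ partialSumset E := fun h =>
      Finset.mem_image_of_mem _ h
    exact ⟨⟨m h1, m h2, m h3, m h4⟩, by ring⟩
  · intro t ht t' ht' h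
    simp only [Prod.mk.injEq] at h
    obtain ⟨h1, h2, h3, h4⟩ := h
    have hb1 : t.2.1 = t'.2.1 := by omega
    have hc : t.1 = t'.1 := by omega
    have hb2 : t.2.2 = t'.2.2 := by omega
    exact Prod.ext hc (Prod.ext hb1 hb2)

theorem bsg_sumQ (S : Finset ℤ) (Dset : Finset ℤ) :
    ∑ d ∈ Dset, ((S ×ˢ S ×ˢ S ×ˢ S).filter
        (fun q => q.1 - q.2.1 + q.2.2.1 - q.2.2.2 = d)).card ≤ S.card ^ 4 := by
  classical
  set T := S ×ˢ S ×ˢ S ×ˢ S with hT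
  set alt : ℤ × ℤ × ℤ × ℤ → ℤ := fun q => q.1 - q.2.1 + q.2.2.1 - q.2.2.2 with halt
  have hW : (T.filter (fun q => alt q ∈ Dset)).card
      = ∑ d ∈ Dset, ((T.filter (fun q => alt q ∈ Dset)).filter (fun q => alt q = d)).card :=
    Finset.card_eq_sum_card_fiberwise (f := alt) (t := Dset)
      (fun q hq => (Finset.mem_filter.1 hq).2)
  have heq : ∀ d ∈ Dset, (T.filter (fun q => alt q = d)).card
      = ((T.filter (fun q => alt q ∈ Dset)).filter (fun q => alt q = d)).card := by
    intro d hd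
    congr 1
    ext q
    simp only [mem_filter]
    constructor
    · rintro ⟨h1, h2⟩; exact ⟨⟨h1, h2 ▸ hd⟩, h2⟩
    · rintro ⟨⟨h1, -⟩, h2⟩; exact ⟨h1, h2⟩
  calc ∑ d ∈ Dset, (T.filter (fun q => alt q = d)).card
      = (T.filter (fun q => alt q ∈ Dset)).card := by
        rw [hW]; exact Finset.sum_congr rfl heq
    _ ≤ T.card := Finset.card_le_card (Finset.filter_subset _ _)
    _ = S.card ^ 4 := by simp only [hT, Finset.card_product]; ring

set_option maxHeartbeats 2000000 in
theorem bsg_variant :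
    ∃ C : ℝ, 0 < C ∧
      ∀ (n : ℕ) (A B : Finset ℤ) (E : Finset (ℤ × ℤ)) (p K : ℝ),
        A.card = n → B.card = n → E ⊆ A ×ˢ B → 0 < p →
        (E.card : ℝ) = p * (n : ℝ) ^ 2 →
        ((partialSumset E).card : ℝ) ≤ K * (A.card : ℝ) →
        ∃ A' ⊆ A, p * n / 4 ≤ (A'.card : ℝ) ∧
          ((A' - A').card : ℝ) ≤ C * K ^ 4 * p ^ (-(5 : ℤ)) * n := by
  classical
  refine ⟨131072, by norm_num, ?_⟩
  intro n A B E p K hA hB hE hp hEcard hScard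
  rcases Nat.eq_zero_or_pos n with hn0 | hn1
  · subst hn0
    refine ⟨∅, empty_subset _, by simp, by simp⟩
  -- basic positivity
  have hnR : (1 : ℝ) ≤ (n : ℝ) := by exact_mod_cast hn1
  have hnpos : (0 : ℝ) < (n : ℝ) := by linarith
  set S := partialSumset E with hSdef
  -- degrees
  set N : ℤ → Finset ℤ := fun b => A.filter (fun a => (a, b) ∈ E) with hN
  have hdeg : ∑ b ∈ B, ((N b).card : ℝ) = p * (n : ℝ) ^ 2 := by
    rw [← hEcard]
    exact_mod_cast congrArg (Nat.cast : ℕ → ℝ) (bsg_degsum A B E hE)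
  -- Cauchy–Schwarz
  have hCS : p ^ 2 * (n : ℝ) ^ 3 ≤ ∑ b ∈ B, ((N b).card : ℝ) ^ 2 := by
    have h := sq_sum_le_card_mul_sum_sq (s := B) (f := fun b => ((N b).card : ℝ))
    rw [hdeg, hB] at h
    nlinarith [h, hnpos]
  -- bad pairs
  set P2 : ℤ → ℤ → ℕ := fun a a' => (B.filter (fun b => (a, b) ∈ E ∧ (a', b) ∈ E)).card with hP2
  set Bad : Finset (ℤ × ℤ) :=
    (A ×ˢ A).filter (fun q => ((P2 q.1 q.2 : ℝ)) < p ^ 2 * n / 128) with hBadDef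
  have hBadA : Bad ⊆ A ×ˢ A := Finset.filter_subset _ _
  have hp2n : (0 : ℝ) ≤ p ^ 2 * n / 128 := by positivity
  have hbadsum : ∑ b ∈ B, ((((N b) ×ˢ (N b)).filter (fun q => q ∈ Bad)).card : ℝ)
      ≤ p ^ 2 * (n : ℝ) ^ 3 / 128 := by
    have h1 : ∑ b ∈ B, ((((N b) ×ˢ (N b)).filter (fun q => q ∈ Bad)).card : ℝ)
        = ∑ q ∈ Bad, ((P2 q.1 q.2 : ℝ)) := by
      exact_mod_cast congrArg (Nat.cast : ℕ → ℝ) (bsg_badswap A B E Bad hBadA)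
    have h2 : ∑ q ∈ Bad, ((P2 q.1 q.2 : ℝ)) ≤ Bad.card * (p ^ 2 * n / 128) := by
      have := Finset.sum_le_card_nsmul Bad (fun q => ((P2 q.1 q.2 : ℝ))) (p ^ 2 * n / 128)
        (fun q hq => le_of_lt (Finset.mem_filter.1 hq).2)
      rwa [nsmul_eq_mul] at this
    have h3 : (Bad.card : ℝ) ≤ (n : ℝ) ^ 2 := by
      have := Finset.card_le_card hBadA
      rw [Finset.card_product, hA] at this
      have : (Bad.card : ℝ) ≤ (n : ℝ) * n := by exact_mod_cast this
      nlinarith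
    rw [h1]
    calc ∑ q ∈ Bad, ((P2 q.1 q.2 : ℝ)) ≤ Bad.card * (p ^ 2 * n / 128) := h2
      _ ≤ (n : ℝ) ^ 2 * (p ^ 2 * n / 128) := by
          exact mul_le_mul_of_nonneg_right h3 hp2n
      _ = p ^ 2 * (n : ℝ) ^ 3 / 128 := by ring
  -- choose a good vertex b0
  have hBne : B.Nonempty := Finset.card_pos.1 (hB ▸ hn1)
  have hselect : ∃ b0 ∈ B, p ^ 2 * (n : ℝ) ^ 2 / 2
      ≤ ((N b0).card : ℝ) ^ 2 - 64 * ((((N b0) ×ˢ (N b0)).filter (fun q => q ∈ Bad)).card : ℝ) := by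
    apply Finset.exists_le_of_sum_le hBne
    rw [Finset.sum_const, nsmul_eq_mul, hB]
    have expand : ∑ b ∈ B, (((N b).card : ℝ) ^ 2
        - 64 * ((((N b) ×ˢ (N b)).filter (fun q => q ∈ Bad)).card : ℝ))
        = (∑ b ∈ B, ((N b).card : ℝ) ^ 2)
          - 64 * ∑ b ∈ B, ((((N b) ×ˢ (N b)).filter (fun q => q ∈ Bad)).card : ℝ) := by
      rw [Finset.sum_sub_distrib, Finset.mul_sum]
    rw [expand]
    nlinarith [hCS, hbadsum]
  obtain ⟨b0, hb0B, hb0⟩ := hselect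
  set X := N b0 with hX
  have hXA : X ⊆ A := Finset.filter_subset _ _
  set m : ℝ := (X.card : ℝ) with hm
  set badc := (((X ×ˢ X)).filter (fun q => q ∈ Bad)).card with hbadc
  have hb0' : p ^ 2 * (n : ℝ) ^ 2 / 2 ≤ m ^ 2 - 64 * (badc : ℝ) := hb0
  have hbc0 : (0 : ℝ) ≤ (badc : ℝ) := Nat.cast_nonneg _
  have hm0 : (0 : ℝ) ≤ m := Nat.cast_nonneg _
  have hpn : (0 : ℝ) < p * n := by positivity
  have hmlow : p * n / 2 ≤ m := by nlinarith [hb0', hbc0, hm0, hpn]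
  have hbadm : 64 * (badc : ℝ) ≤ m ^ 2 := by nlinarith [hb0', hpn]
  -- bad degrees
  set baddeg : ℤ → ℕ := fun a => (X.filter (fun a' => (a, a') ∈ Bad)).card with hbd
  have hdegsum : ∑ a ∈ X, baddeg a = badc := (bsg_badfib X Bad).symm
  -- the subset A'
  set A' := X.filter (fun a => 8 * baddeg a ≤ X.card) with hA'
  set T := X.filter (fun a => ¬ (8 * baddeg a ≤ X.card)) with hT
  have hpart : A'.card + T.card = X.card :=
    Finset.card_filter_add_card_filter_not _
  have hTsum : T.card * (X.card + 1) ≤ 8 * badc := by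
    calc T.card * (X.card + 1) = ∑ _a ∈ T, (X.card + 1) := by
          rw [Finset.sum_const, smul_eq_mul]
      _ ≤ ∑ a ∈ T, 8 * baddeg a := by
          refine Finset.sum_le_sum fun a ha => ?_
          have := (Finset.mem_filter.1 ha).2
          omega
      _ ≤ ∑ a ∈ X, 8 * baddeg a :=
          Finset.sum_le_sum_of_subset (Finset.filter_subset _ _)
      _ = 8 * badc := by rw [← Finset.mul_sum, hdegsum]
  have hTle : (T.card : ℝ) ≤ m / 8 := by
    have h1 : (T.card : ℝ) * (m + 1) ≤ 8 * (badc : ℝ) := by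
      have : ((T.card * (X.card + 1) : ℕ) : ℝ) ≤ ((8 * badc : ℕ) : ℝ) := by
        exact_mod_cast hTsum
      push_cast at this
      linarith
    nlinarith [hbadm, hm0, Nat.cast_nonneg (α := ℝ) T.card]
  have hA'card : (A'.card : ℝ) = m - T.card := by
    have : ((A'.card + T.card : ℕ) : ℝ) = m := by rw [hpart]
    push_cast at this
    linarith
  have hA'low : p * n / 4 ≤ (A'.card : ℝ) := by
    rw [hA'card]; nlinarith [hTle, hmlow, hpn]
  have hA'A : A' ⊆ A := (Finset.filter_subset _ _).trans hXA
  refine ⟨A', hA'A, hA'low, ?_⟩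
  -- P2 lower bounds off Bad
  have hP2symm : ∀ x y, P2 x y = P2 y x := by
    intro x y
    simp only [hP2]
    congr 1
    ext b
    simp only [mem_filter]
    tauto
  have hnotbad : ∀ x y, x ∈ A → y ∈ A → (x, y) ∉ Bad → p ^ 2 * n / 128 ≤ (P2 x y : ℝ) := by
    intro x y hx hy hnb
    by_contra hlt
    push_neg at hlt
    exact hnb (Finset.mem_filter.2 ⟨Finset.mem_product.2 ⟨hx, hy⟩, hlt⟩)
  -- key per-difference bound
  have hkey : ∀ d ∈ A' - A',
      (3 / 4 * m) * (p ^ 2 * n / 128) ^ 2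
        ≤ (((S ×ˢ S ×ˢ S ×ˢ S).filter
            (fun q => q.1 - q.2.1 + q.2.2.1 - q.2.2.2 = d)).card : ℝ) := by
    intro d hd
    rw [Finset.mem_sub] at hd
    obtain ⟨a, haA', a', ha'A', hda⟩ := hd
    set Good := X.filter (fun c => (a, c) ∉ Bad ∧ (a', c) ∉ Bad) with hGoodDef
    have haX : a ∈ X := Finset.mem_filter.1 haA' |>.1
    have ha'X : a' ∈ X := Finset.mem_filter.1 ha'A' |>.1
    have haA : a ∈ A := hXA haX
    have ha'A : a' ∈ A := hXA ha'X
    have hadeg : 8 * baddeg a ≤ X.card := (Finset.mem_filter.1 haA').2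
    have ha'deg : 8 * baddeg a' ≤ X.card := (Finset.mem_filter.1 ha'A').2
    have hGoodcard : 3 / 4 * m ≤ (Good.card : ℝ) := by
      have hsub : X ⊆ Good ∪ X.filter (fun c => (a, c) ∈ Bad)
          ∪ X.filter (fun c => (a', c) ∈ Bad) := by
        intro x hx
        simp only [Finset.mem_union, Finset.mem_filter, hGoodDef]
        by_cases h1 : (a, x) ∈ Bad
        · tauto
        · by_cases h2 : (a', x) ∈ Bad <;> tauto
      have hcard : X.card ≤ Good.card + baddeg a + baddeg a' := by
        have hf1 : (X.filter (fun c => (a, c) ∈ Bad)).card = baddeg a := rfl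
        have hf2 : (X.filter (fun c => (a', c) ∈ Bad)).card = baddeg a' := rfl
        have u1 := Finset.card_union_le (Good ∪ X.filter (fun c => (a, c) ∈ Bad))
          (X.filter (fun c => (a', c) ∈ Bad))
        have u2 := Finset.card_union_le Good (X.filter (fun c => (a, c) ∈ Bad))
        have u0 := Finset.card_le_card hsub
        omega
      have h1 : (baddeg a : ℝ) ≤ m / 8 := by
        have : ((8 * baddeg a : ℕ) : ℝ) ≤ m := by rw [hm]; exact_mod_cast hadeg
        push_cast at this; linarith
      have h2 : (baddeg a' : ℝ) ≤ m / 8 := by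
        have : ((8 * baddeg a' : ℕ) : ℝ) ≤ m := by rw [hm]; exact_mod_cast ha'deg
        push_cast at this; linarith
      have h3 : m ≤ (Good.card : ℝ) + baddeg a + baddeg a' := by rw [hm]; exact_mod_cast hcard
      linarith
    -- each good c gives many paths
    have hgoodP2 : ∀ c ∈ Good,
        (p ^ 2 * n / 128) ^ 2 ≤ ((P2 a c : ℝ)) * ((P2 c a' : ℝ)) := by
      intro c hc
      obtain ⟨hcX, hnb1, hnb2⟩ := Finset.mem_filter.1 hc
      have hcA : c ∈ A := hXA hcX
      have g1 := hnotbad a c haA hcA hnb1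
      have g2 := hnotbad a' c ha'A hcA hnb2
      rw [hP2symm a' c] at g2
      calc (p ^ 2 * n / 128) ^ 2 = (p ^ 2 * n / 128) * (p ^ 2 * n / 128) := sq _
        _ ≤ ((P2 a c : ℝ)) * ((P2 c a' : ℝ)) :=
            mul_le_mul g1 g2 hp2n (Nat.cast_nonneg _)
    -- count paths
    have hpaths : (3 / 4 * m) * (p ^ 2 * n / 128) ^ 2
        ≤ (∑ c ∈ Good, (P2 a c) * (P2 c a') : ℕ) := by
      have h1 : (Good.card : ℝ) * ((p ^ 2 * n / 128) ^ 2)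
          ≤ ∑ c ∈ Good, ((P2 a c : ℝ)) * ((P2 c a' : ℝ)) := by
        have := Finset.card_nsmul_le_sum Good
          (fun c => ((P2 a c : ℝ)) * ((P2 c a' : ℝ))) ((p ^ 2 * n / 128) ^ 2) hgoodP2
        rwa [nsmul_eq_mul] at this
      have h2 : (∑ c ∈ Good, ((P2 a c : ℝ)) * ((P2 c a' : ℝ)))
          = ((∑ c ∈ Good, (P2 a c) * (P2 c a') : ℕ) : ℝ) := by push_cast; rfl
      rw [h2] at h1
      have h3 : (3 / 4 * m) * (p ^ 2 * n / 128) ^ 2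
          ≤ (Good.card : ℝ) * ((p ^ 2 * n / 128) ^ 2) := by
        apply mul_le_mul_of_nonneg_right hGoodcard (by positivity)
      linarith
    have hD := bsg_pathlower B E Good a a'
    have hQ := bsg_intoQ E Good B a a'
    rw [hda] at hQ
    have : (∑ c ∈ Good, (P2 a c) * (P2 c a') : ℕ)
        ≤ (((S ×ˢ S ×ˢ S ×ˢ S).filter
            (fun q => q.1 - q.2.1 + q.2.2.1 - q.2.2.2 = d)).card) := le_trans hD hQ
    have := (Nat.cast_le (α := ℝ)).2 this
    linarith
  -- sum over differences
  have hsumQ : ((∑ d ∈ A' - A', ((S ×ˢ S ×ˢ S ×ˢ S).filter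
      (fun q => q.1 - q.2.1 + q.2.2.1 - q.2.2.2 = d)).card : ℕ) : ℝ)
      ≤ ((S.card : ℝ)) ^ 4 := by
    have := bsg_sumQ S (A' - A')
    exact_mod_cast this
  have hlb : ((A' - A').card : ℝ) * ((3 / 4 * m) * (p ^ 2 * n / 128) ^ 2)
      ≤ ((∑ d ∈ A' - A', ((S ×ˢ S ×ˢ S ×ˢ S).filter
          (fun q => q.1 - q.2.1 + q.2.2.1 - q.2.2.2 = d)).card : ℕ) : ℝ) := by
    have h1 := Finset.card_nsmul_le_sum (A' - A')
      (fun d => (((S ×ˢ S ×ˢ S ×ˢ S).filter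
          (fun q => q.1 - q.2.1 + q.2.2.1 - q.2.2.2 = d)).card : ℝ))
      ((3 / 4 * m) * (p ^ 2 * n / 128) ^ 2) hkey
    rw [nsmul_eq_mul] at h1
    have h2 : (∑ d ∈ A' - A', (((S ×ˢ S ×ˢ S ×ˢ S).filter
        (fun q => q.1 - q.2.1 + q.2.2.1 - q.2.2.2 = d)).card : ℝ))
        = ((∑ d ∈ A' - A', ((S ×ˢ S ×ˢ S ×ˢ S).filter
            (fun q => q.1 - q.2.1 + q.2.2.1 - q.2.2.2 = d)).card : ℕ) : ℝ) := by
      push_cast; rfl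
    rw [h2] at h1
    exact h1
  -- bound on |S|^4
  have hSn : (S.card : ℝ) ≤ K * n := by rw [← hA] at *; exact_mod_cast hScard
  have hS0 : (0 : ℝ) ≤ (S.card : ℝ) := Nat.cast_nonneg _
  have hS4 : ((S.card : ℝ)) ^ 4 ≤ (K * n) ^ 4 := pow_le_pow_left₀ hS0 hSn 4
  -- final computation
  have hmain : ((A' - A').card : ℝ) * ((3 / 4 * m) * (p ^ 2 * n / 128) ^ 2)
      ≤ K ^ 4 * (n : ℝ) ^ 4 := by
    calc ((A' - A').card : ℝ) * ((3 / 4 * m) * (p ^ 2 * n / 128) ^ 2)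
        ≤ ((S.card : ℝ)) ^ 4 := le_trans hlb hsumQ
      _ ≤ (K * n) ^ 4 := hS4
      _ = K ^ 4 * (n : ℝ) ^ 4 := by ring
  have hdd0 : (0 : ℝ) ≤ ((A' - A').card : ℝ) := Nat.cast_nonneg _
  have hstep : ((A' - A').card : ℝ) * (3 * p ^ 5 * (n : ℝ) ^ 3 / 131072)
      ≤ K ^ 4 * (n : ℝ) ^ 4 := by
    have hmono : (3 * p ^ 5 * (n : ℝ) ^ 3 / 131072)
        ≤ ((3 / 4 * m) * (p ^ 2 * n / 128) ^ 2) := by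
      have : (3 / 4 * (p * n / 2)) * (p ^ 2 * n / 128) ^ 2
          ≤ (3 / 4 * m) * (p ^ 2 * n / 128) ^ 2 := by
        apply mul_le_mul_of_nonneg_right (by linarith [hmlow]) (by positivity)
      calc 3 * p ^ 5 * (n : ℝ) ^ 3 / 131072
          = (3 / 4 * (p * n / 2)) * (p ^ 2 * n / 128) ^ 2 := by ring
        _ ≤ _ := this
    calc ((A' - A').card : ℝ) * (3 * p ^ 5 * (n : ℝ) ^ 3 / 131072)
        ≤ ((A' - A').card : ℝ) * ((3 / 4 * m) * (p ^ 2 * n / 128) ^ 2) :=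
          mul_le_mul_of_nonneg_left hmono hdd0
      _ ≤ K ^ 4 * (n : ℝ) ^ 4 := hmain
  have hz : p ^ (-(5 : ℤ)) = (p ^ 5)⁻¹ := by
    rw [zpow_neg]
    norm_cast
  rw [hz]
  have hp5 : (0 : ℝ) < p ^ 5 := by positivity
  rw [show (131072 : ℝ) * K ^ 4 * (p ^ 5)⁻¹ * n = 131072 * K ^ 4 * n / p ^ 5 by rw [div_eq_mul_inv]; ring,
    le_div_iff₀ hp5]
  have hn3 : (0 : ℝ) < (n : ℝ) ^ 3 := by positivity
  have h4 : ((A' - A').card : ℝ) * p ^ 5 * (n : ℝ) ^ 3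
      ≤ 131072 * K ^ 4 * (n : ℝ) * (n : ℝ) ^ 3 := by nlinarith [hstep]
  exact le_of_mul_le_mul_right h4 hn3
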